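/- arXiv:2107.02883 — 3 statements merged into one kernel-verified Lean document; each statement's English description precedes it below -/
import Mathlib

section
/- Let d ≥ 2, r > 0, and h : (0, r] → ℝ≥0 increasing with ∫₀^r h(t)/t^{d-1} dt < ∞. Then the Riemann–Stieltjes integral ∫₀^r k_{d-2}(t) dh(t) converges (is > −∞), where k_0(t) = ln t and k_{d-2}(t) = −t^{2−d} for d > 2. -/
open MeasureTheory Set Filter
open scoped Interval Topology ENNReal

/-- The kernel `k_{d-2}`: `log t` when `d = 2` and `-1/t^(d-2)` when `d > 2`. -/
noncomputable def kk (d : ℕ) (t : ℝ) : ℝ := if d = 2 then Real.log t else -1 / t ^ (d - 2)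

noncomputable def cc (d : ℕ) : ℝ := if d = 2 then 1 else (d : ℝ) - 2

lemma cc_pos {d : ℕ} (hd : 2 ≤ d) : 0 < cc d := by
  unfold cc; split
  · norm_num
  · have : (2:ℝ) < d := by exact_mod_cast (by omega : 2 < d)
    linarith

lemma kk_meas (d : ℕ) : Measurable (kk d) := by
  unfold kk; split
  · exact Real.measurable_log
  · exact measurable_const.div (measurable_id.pow_const _)

lemma kk_mono (d : ℕ) {t r : ℝ} (ht : 0 < t) (htr : t ≤ r) : kk d t ≤ kk d r := by
  unfold kk; split
  · exact Real.log_le_log ht htr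
  · have h1 : (0:ℝ) < t ^ (d-2) := pow_pos ht _
    have h2 : t ^ (d-2) ≤ r ^ (d-2) := pow_le_pow_left₀ ht.le htr _
    have := one_div_le_one_div_of_le h1 h2
    simp only [neg_div]; linarith

lemma kk_diff (d : ℕ) (hd : 2 ≤ d) {t r : ℝ} (ht : 0 < t) (htr : t ≤ r) :
    kk d r - kk d t = ∫ s in Ioc t r, cc d / s ^ (d - 1) := by
  rw [← intervalIntegral.integral_of_le htr]
  have hr : 0 < r := lt_of_lt_of_le ht htr
  have h0 : (0:ℝ) ∉ [[t, r]] := by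
    rw [Set.uIcc_of_le htr]; intro hx; exact absurd hx.1 (not_le.mpr ht)
  rcases eq_or_lt_of_le hd with h2 | h2
  · subst h2
    simp only [kk, cc, if_true, if_pos rfl]
    rw [show (2-1:ℕ) = 1 from rfl]
    simp only [pow_one]
    rw [integral_one_div h0, Real.log_div hr.ne' ht.ne']
  · have hcc : cc d = (d:ℝ) - 2 := if_neg (by omega)
    have hkk : ∀ x : ℝ, kk d x = -1 / x ^ (d-2) := fun x => if_neg (by omega)
    have hcong : ∀ x ∈ [[t, r]], cc d / x ^ (d - 1) = ((d:ℝ) - 2) * x ^ ((1:ℤ) - d) := by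
      intro x hx
      rw [Set.uIcc_of_le htr] at hx
      have hx0 : 0 < x := lt_of_lt_of_le ht hx.1
      rw [hcc]
      rw [div_eq_mul_inv]
      congr 1
      rw [show (1:ℤ) - d = -((d:ℤ) - 1) by ring, zpow_neg, ← zpow_natCast x (d-1)]
      congr 2
      omega
    rw [intervalIntegral.integral_congr hcong, intervalIntegral.integral_const_mul,
      integral_zpow (Or.inr ⟨by omega, h0⟩)]
    have e1 : ((1:ℤ) - d) + 1 = 2 - (d:ℤ) := by ring
    rw [e1]
    have ht' : ∀ x : ℝ, 0 < x → x ^ ((2:ℤ) - d) = 1 / x ^ (d - 2 : ℕ) := by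
      intro x hx0
      rw [show (2:ℤ) - d = -((d:ℤ) - 2) by ring, zpow_neg, ← zpow_natCast x (d-2), one_div]
      congr 2
      omega
    rw [hkk, hkk, ht' r hr, ht' t ht]
    have hp1 : (0:ℝ) < t ^ (d-2) := pow_pos ht _
    have hp2 : (0:ℝ) < r ^ (d-2) := pow_pos hr _
    have hD : ((d:ℝ) - 2) ≠ 0 := by
      have : (2:ℝ) < d := by exact_mod_cast (by omega : 2 < d)
      linarith
    rw [show (((1:ℤ) - (d:ℤ) : ℤ) : ℝ) + 1 = -((d:ℝ) - 2) from by push_cast; ring,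
      div_neg, mul_neg, mul_div_assoc', mul_div_cancel_left₀ _ hD]
    ring

/-- If `h` is a nonnegative increasing (Stieltjes) function on `(0, r]` with
`∫₀^r h(t)/t^(d-1) dt < ∞`, then the Stieltjes integral `∫₀^r k_{d-2}(t) dh(t)`
converges, i.e. `k_{d-2}` is integrable against the Lebesgue–Stieltjes measure of `h`
on `(0, r]`. -/
theorem stmt2 (d : ℕ) (hd : 2 ≤ d) (r : ℝ) (hr : 0 < r) (h : StieltjesFunction ℝ)
    (hpos : ∀ t ∈ Set.Ioc (0 : ℝ) r, 0 ≤ h t)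
    (hint : MeasureTheory.IntegrableOn (fun t => h t / t ^ (d - 1)) (Set.Ioc (0 : ℝ) r)) :
    MeasureTheory.IntegrableOn (kk d) (Set.Ioc (0 : ℝ) r) h.measure := by
  have hmeas_h : Measurable (fun x => h x) := h.mono.measurable
  -- h 0 ≥ 0 by right-continuity
  have h0le : 0 ≤ h 0 := by
    have htend : Tendsto h (𝓝[>] (0:ℝ)) (𝓝 (h 0)) :=
      (h.right_continuous 0).tendsto.mono_left (nhdsWithin_mono _ Ioi_subset_Ici_self)
    refine ge_of_tendsto htend ?_
    filter_upwards [Ioo_mem_nhdsGT_of_mem ⟨le_refl (0:ℝ), hr⟩] with s hs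
    exact hpos s ⟨hs.1, hs.2.le⟩
  have hfin : h.measure (Ioc 0 r) < ⊤ := by
    rw [h.measure_Ioc]; exact ENNReal.ofReal_lt_top
  haveI : IsFiniteMeasure (h.measure.restrict (Ioc 0 r)) :=
    ⟨by rwa [Measure.restrict_apply_univ]⟩
  set G : ℝ → ℝ≥0∞ := fun s => ENNReal.ofReal (cc d / s ^ (d - 1)) with hG
  have hGmeas : Measurable G :=
    (measurable_const.div (measurable_id.pow_const _)).ennreal_ofReal
  set f : ℝ → ℝ → ℝ≥0∞ := fun t s => (Ioi t).indicator G s with hf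
  have hfmeas : AEMeasurable (Function.uncurry f)
      ((h.measure.restrict (Ioc 0 r)).prod (volume.restrict (Ioc 0 r))) := by
    have : Function.uncurry f = {p : ℝ × ℝ | p.1 < p.2}.indicator (fun p => G p.2) := by
      funext p
      by_cases hp : p.1 < p.2 <;>
        simp [Function.uncurry, f, Set.indicator, hp, Set.mem_Ioi]
    rw [this]
    exact ((hGmeas.comp measurable_snd).indicator
      (measurableSet_lt measurable_fst measurable_snd)).aemeasurable
  have swap := lintegral_lintegral_swap hfmeas
  -- LHS identification
  have hLHS : ∫⁻ t in Ioc 0 r, ∫⁻ s in Ioc 0 r, f t s ∂volume ∂h.measure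
      = ∫⁻ t in Ioc 0 r, ENNReal.ofReal (kk d r - kk d t) ∂h.measure := by
    refine setLIntegral_congr_fun measurableSet_Ioc (fun t ht => ?_)
    have hIoc : Ioi t ∩ Ioc 0 r = Ioc t r := by
      ext s
      simp only [Set.mem_inter_iff, Set.mem_Ioi, Set.mem_Ioc]
      exact ⟨fun ⟨h1, _, h3⟩ => ⟨h1, h3⟩, fun ⟨h1, h2⟩ => ⟨h1, ht.1.trans h1, h2⟩⟩
    have hInt : IntegrableOn (fun s => cc d / s ^ (d - 1)) (Ioc t r) := by
      have hcont : ContinuousOn (fun s => cc d / s ^ (d - 1)) (Icc t r) :=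
        continuousOn_const.div (continuousOn_pow _)
          (fun x hx => (pow_pos (lt_of_lt_of_le ht.1 hx.1) _).ne')
      exact (hcont.integrableOn_compact isCompact_Icc).mono_set Ioc_subset_Icc_self
    have hnn : 0 ≤ᵐ[volume.restrict (Ioc t r)] fun s => cc d / s ^ (d - 1) := by
      refine (ae_restrict_iff' measurableSet_Ioc).2 (Filter.Eventually.of_forall fun s hs => ?_)
      exact div_nonneg (cc_pos hd).le (pow_nonneg (ht.1.trans hs.1).le _)
    calc ∫⁻ s in Ioc 0 r, f t s ∂volume
        = ∫⁻ s in Ioi t ∩ Ioc 0 r, G s ∂volume := by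
          rw [hf]
          rw [lintegral_indicator measurableSet_Ioi,
            Measure.restrict_restrict measurableSet_Ioi]
      _ = ∫⁻ s in Ioc t r, G s ∂volume := by rw [hIoc]
      _ = ENNReal.ofReal (∫ s in Ioc t r, cc d / s ^ (d - 1)) :=
          (ofReal_integral_eq_lintegral_ofReal hInt hnn).symm
      _ = ENNReal.ofReal (kk d r - kk d t) := by rw [← kk_diff d hd ht.1 ht.2]
  -- RHS bound
  have hRHS : ∫⁻ s in Ioc 0 r, ∫⁻ t in Ioc 0 r, f t s ∂h.measure ∂volume
      ≤ ENNReal.ofReal (cc d) * ∫⁻ s in Ioc 0 r, ‖h s / s ^ (d - 1)‖₊ ∂volume := by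
    have step1 : ∫⁻ s in Ioc 0 r, ∫⁻ t in Ioc 0 r, f t s ∂h.measure ∂volume
        ≤ ∫⁻ s in Ioc 0 r, G s * ENNReal.ofReal (h s) ∂volume := by
      refine setLIntegral_mono (hGmeas.mul hmeas_h.ennreal_ofReal) fun s hs => ?_
      have heq : (fun t => f t s) = (Iio s).indicator (fun _ => G s) := by
        funext t
        by_cases hts : t < s <;>
          simp [hf, Set.indicator, hts, Set.mem_Ioi, Set.mem_Iio]
      calc ∫⁻ t in Ioc 0 r, f t s ∂h.measure
          = G s * h.measure (Iio s ∩ Ioc 0 r) := by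
            rw [heq, lintegral_indicator measurableSet_Iio, lintegral_const,
              Measure.restrict_restrict measurableSet_Iio, Measure.restrict_apply_univ]
        _ ≤ G s * ENNReal.ofReal (h s) := by
            refine mul_le_mul_right ?_ _
            calc h.measure (Iio s ∩ Ioc 0 r) ≤ h.measure (Ioc 0 s) := by
                  refine measure_mono fun x hx => ⟨hx.2.1, hx.1.le⟩
              _ = ENNReal.ofReal (h s - h 0) := h.measure_Ioc 0 s
              _ ≤ ENNReal.ofReal (h s) := ENNReal.ofReal_le_ofReal (by linarith)
    have step2 : ∫⁻ s in Ioc 0 r, G s * ENNReal.ofReal (h s) ∂volume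
        ≤ ∫⁻ s in Ioc 0 r, ENNReal.ofReal (cc d) * ‖h s / s ^ (d - 1)‖₊ ∂volume := by
      refine setLIntegral_mono
        (measurable_const.mul (hmeas_h.div (measurable_id.pow_const _)).nnnorm.coe_nnreal_ennreal)
        fun s hs => ?_
      have hs0 : (0:ℝ) < s := hs.1
      have hpow : (0:ℝ) < s ^ (d - 1) := pow_pos hs0 _
      have e : cc d / s ^ (d - 1) * h s = cc d * (h s / s ^ (d - 1)) := by ring
      rw [hG]
      rw [← ENNReal.ofReal_mul (div_nonneg (cc_pos hd).le hpow.le), e,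
        ENNReal.ofReal_mul (cc_pos hd).le]
      exact mul_le_mul_right (Real.ofReal_le_enorm _) _
    calc _ ≤ _ := step1
      _ ≤ _ := step2
      _ = ENNReal.ofReal (cc d) * ∫⁻ s in Ioc 0 r, ‖h s / s ^ (d - 1)‖₊ ∂volume :=
        lintegral_const_mul _ (hmeas_h.div (measurable_id.pow_const _)).nnnorm.coe_nnreal_ennreal
  have key : ∫⁻ t in Ioc 0 r, ENNReal.ofReal (kk d r - kk d t) ∂h.measure < ⊤ := by
    rw [← hLHS, swap]
    refine lt_of_le_of_lt hRHS ?_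
    exact ENNReal.mul_lt_top ENNReal.ofReal_lt_top hint.2
  -- conclude
  refine ⟨(kk_meas d).aestronglyMeasurable.restrict, ?_⟩
  have bound : ∫⁻ t in Ioc 0 r, ‖kk d t‖₊ ∂h.measure
      ≤ ∫⁻ t in Ioc 0 r,
          (ENNReal.ofReal (kk d r - kk d t) + ENNReal.ofReal |kk d r|) ∂h.measure := by
    refine setLIntegral_mono
      (((measurable_const.sub (kk_meas d)).ennreal_ofReal).add measurable_const)
      fun t ht => ?_
    have hmono := kk_mono d ht.1 ht.2
    have habs : |kk d t| ≤ (kk d r - kk d t) + |kk d r| := by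
      rcases abs_cases (kk d t) with ⟨he, _⟩ | ⟨he, _⟩ <;> rcases abs_cases (kk d r) with
        ⟨he2, _⟩ | ⟨he2, _⟩ <;> rw [he, he2] <;> linarith
    calc (‖kk d t‖₊ : ℝ≥0∞) = ENNReal.ofReal |kk d t| := by
          exact Real.enorm_eq_ofReal_abs _
      _ ≤ ENNReal.ofReal ((kk d r - kk d t) + |kk d r|) := ENNReal.ofReal_le_ofReal habs
      _ = ENNReal.ofReal (kk d r - kk d t) + ENNReal.ofReal |kk d r| :=
          ENNReal.ofReal_add (by linarith) (abs_nonneg _)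
  refine lt_of_le_of_lt bound ?_
  rw [lintegral_add_right _ measurable_const, lintegral_const,
    Measure.restrict_apply_univ]
  exact ENNReal.add_lt_top.2 ⟨key, ENNReal.mul_lt_top ENNReal.ofReal_lt_top hfin⟩
end

section
/- Let d ≥ 2, set D := max{1, d−2}, r > 0, and let h : [0, r] → ℝ≥0 be increasing with ∫₀^r h(t)/t^{d-1} dt < ∞ and h(0) = 0. Then D·∫₀^r h(t)/t^{d-1} dt = ∫₀^r (k_{d-2}(r) − k_{d-2}(t)) dh(t) (integration by parts identity for the kernel k_{d-2}). -/
open MeasureTheory Set Filter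

lemma kk_hasDerivAt (d : ℕ) (hd : 2 ≤ d) {t : ℝ} (ht : 0 < t) :
    HasDerivAt (kk d) (((max 1 (d - 2) : ℕ) : ℝ) / t ^ (d - 1)) t := by
  rcases eq_or_lt_of_le hd with h2 | h2
  · have hd2 : d = 2 := h2.symm
    subst hd2
    have hfun : kk 2 = Real.log := by funext x; simp [kk]
    have hval : ((max 1 (2 - 2) : ℕ) : ℝ) / t ^ (2 - 1) = t⁻¹ := by norm_num
    rw [hfun, hval]
    exact Real.hasDerivAt_log ht.ne'
  · have hd2 : d ≠ 2 := by omega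
    have hk : kk d = fun x : ℝ => -(x ^ (d - 2))⁻¹ := by
      funext x; simp [kk, hd2, neg_div, one_div]
    rw [hk]
    have h1 : HasDerivAt (fun x : ℝ => x ^ (d - 2)) ((d - 2 : ℕ) * t ^ (d - 2 - 1)) t :=
      hasDerivAt_pow _ t
    have h2' := (h1.inv (pow_ne_zero _ ht.ne')).neg
    convert h2' using 1
    case e'_4 => rfl
    case e'_5 => rfl
    case e'_8 => rfl
    have hmax : max 1 (d - 2) = d - 2 := max_eq_right (by omega)
    rw [hmax, neg_div, neg_neg]
    rw [div_eq_div_iff (pow_ne_zero _ ht.ne') (pow_ne_zero 2 (pow_ne_zero _ ht.ne'))]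
    have hpow : (t ^ (d - 2)) ^ 2 = t ^ (d - 2 - 1) * t ^ (d - 1) := by
      rw [← pow_mul, ← pow_add]; congr 1; omega
    rw [hpow]; ring

lemma kk_sub (d : ℕ) (hd : 2 ≤ d) {t r : ℝ} (ht : 0 < t) (htr : t ≤ r) :
    kk d r - kk d t = ∫ s in Set.Ioc t r, ((max 1 (d - 2) : ℕ) : ℝ) / s ^ (d - 1) := by
  have hcont : ContinuousOn (fun s : ℝ => ((max 1 (d - 2) : ℕ) : ℝ) / s ^ (d - 1))
      (Set.Icc t r) := by
    apply ContinuousOn.div continuousOn_const (by fun_prop)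
    intro x hx
    exact pow_ne_zero _ (lt_of_lt_of_le ht hx.1).ne'
  have hInt : IntervalIntegrable (fun s : ℝ => ((max 1 (d - 2) : ℕ) : ℝ) / s ^ (d - 1))
      volume t r := by
    rw [intervalIntegrable_iff_integrableOn_Icc_of_le htr]
    exact hcont.integrableOn_Icc
  have hderiv : ∀ x ∈ Set.uIcc t r,
      HasDerivAt (kk d) (((max 1 (d - 2) : ℕ) : ℝ) / x ^ (d - 1)) x := by
    intro x hx
    rw [Set.uIcc_of_le htr] at hx
    exact kk_hasDerivAt d hd (lt_of_lt_of_le ht hx.1)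
  have := intervalIntegral.integral_eq_sub_of_hasDerivAt hderiv hInt
  rw [← this, intervalIntegral.integral_of_le htr]


/-- Integration-by-parts identity: for a nonnegative increasing (Stieltjes) function `h`
on `[0, r]` with `h 0 = 0` and `∫₀^r h(t)/t^(d-1) dt < ∞`, one has
`D·∫₀^r h(t)/t^(d-1) dt = ∫₀^r (k_{d-2}(r) − k_{d-2}(t)) dh(t)` with `D = max 1 (d-2)`. -/
theorem stmt5 (d : ℕ) (hd : 2 ≤ d) (r : ℝ) (hr : 0 < r) (h : StieltjesFunction ℝ)
    (hpos : ∀ t ∈ Set.Icc (0 : ℝ) r, 0 ≤ h t) (h0 : h 0 = 0)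
    (hint : MeasureTheory.IntegrableOn (fun t => h t / t ^ (d - 1)) (Set.Ioc (0 : ℝ) r)) :
    (max 1 (d - 2) : ℕ) * ∫ t in Set.Ioc (0 : ℝ) r, h t / t ^ (d - 1)
      = ∫ t in Set.Ioc (0 : ℝ) r, (kk d r - kk d t) ∂h.measure := by
  set C : ℝ := ((max 1 (d - 2) : ℕ) : ℝ) with hCdef
  have hC1 : (1 : ℝ) ≤ C := by
    rw [hCdef]; exact_mod_cast Nat.one_le_iff_ne_zero.mpr (by positivity)
  have hCpos : (0 : ℝ) < C := lt_of_lt_of_le one_pos hC1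
  set g : ℝ → ENNReal := fun s => ENNReal.ofReal (C / s ^ (d - 1)) with hgdef
  have hgm : Measurable g := (measurable_const.div (measurable_id.pow_const _)).ennreal_ofReal
  -- integrability of C / s^(d-1) on Ioc t r for 0 < t
  have hintg : ∀ t : ℝ, 0 < t → IntegrableOn (fun s => C / s ^ (d - 1)) (Set.Ioc t r) := by
    intro t ht
    apply IntegrableOn.mono_set _ Set.Ioc_subset_Icc_self
    apply ContinuousOn.integrableOn_Icc
    apply ContinuousOn.div continuousOn_const (by fun_prop)
    intro x hx
    exact pow_ne_zero _ (lt_of_lt_of_le ht hx.1).ne'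
  -- LHS as a lintegral
  have lhs_eq : C * ∫ t in Set.Ioc (0 : ℝ) r, h t / t ^ (d - 1)
      = (∫⁻ s in Set.Ioc (0 : ℝ) r, ENNReal.ofReal (C / s ^ (d - 1) * h s)).toReal := by
    have heq : (fun s : ℝ => C / s ^ (d - 1) * h s) = fun s => C * (h s / s ^ (d - 1)) := by
      funext s; ring
    have hinteg : IntegrableOn (fun s => C / s ^ (d - 1) * h s) (Set.Ioc (0 : ℝ) r) := by
      rw [heq]; exact hint.const_mul C
    have hnn : 0 ≤ᵐ[volume.restrict (Set.Ioc (0 : ℝ) r)]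
        fun s => C / s ^ (d - 1) * h s := by
      filter_upwards [ae_restrict_mem measurableSet_Ioc] with s hs
      exact mul_nonneg (div_nonneg hCpos.le (pow_nonneg hs.1.le _)) (hpos s ⟨hs.1.le, hs.2⟩)
    rw [← ofReal_integral_eq_lintegral_ofReal hinteg hnn,
      ENNReal.toReal_ofReal (integral_nonneg_of_ae hnn)]
    rw [heq, integral_const_mul]
  -- RHS as a lintegral
  have hkkm : Measurable (kk d) := by
    by_cases hd2 : d = 2
    · rw [hd2, show kk 2 = Real.log from by funext x; simp [kk]]; exact Real.measurable_log
    · have hk : kk d = fun t : ℝ => -1 / t ^ (d - 2) := by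
        funext t; simp [kk, hd2]
      rw [hk]
      exact measurable_const.div (measurable_id.pow_const _)
  have rhs_eq : ∫ t in Set.Ioc (0 : ℝ) r, (kk d r - kk d t) ∂h.measure
      = (∫⁻ t in Set.Ioc (0 : ℝ) r, ENNReal.ofReal (kk d r - kk d t) ∂h.measure).toReal := by
    apply integral_eq_lintegral_of_nonneg_ae
    · filter_upwards [ae_restrict_mem measurableSet_Ioc] with t ht
      rw [Pi.zero_apply, kk_sub d hd ht.1 ht.2]
      apply setIntegral_nonneg measurableSet_Ioc
      intro x hx
      exact div_nonneg hCpos.le (pow_nonneg (lt_trans ht.1 hx.1).le _)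
    · exact (measurable_const.sub hkkm).aestronglyMeasurable
  -- key lintegral identity via Tonelli
  have key : ∫⁻ t in Set.Ioc (0 : ℝ) r, ENNReal.ofReal (kk d r - kk d t) ∂h.measure
      = ∫⁻ s in Set.Ioc (0 : ℝ) r, ENNReal.ofReal (C / s ^ (d - 1) * h s) := by
    have step1 : ∫⁻ t in Set.Ioc (0 : ℝ) r, ENNReal.ofReal (kk d r - kk d t) ∂h.measure
        = ∫⁻ t in Set.Ioc (0 : ℝ) r,
            (∫⁻ s in Set.Ioc (0 : ℝ) r, (if t < s then g s else 0)) ∂h.measure := by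
      apply setLIntegral_congr_fun_ae measurableSet_Ioc
      apply ae_of_all
      intro t ht
      have hnn : 0 ≤ᵐ[volume.restrict (Set.Ioc t r)] fun s => C / s ^ (d - 1) := by
        filter_upwards [ae_restrict_mem measurableSet_Ioc] with s hs
        exact div_nonneg hCpos.le (pow_nonneg (lt_trans ht.1 hs.1).le _)
      rw [kk_sub d hd ht.1 ht.2,
        ofReal_integral_eq_lintegral_ofReal (hintg t ht.1) hnn]
      have hite : (fun s : ℝ => if t < s then g s else 0) = (Set.Ioi t).indicator g := by
        funext s; simp [Set.indicator_apply]
      rw [hite, lintegral_indicator measurableSet_Ioi,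
        Measure.restrict_restrict measurableSet_Ioi]
      have hset : Set.Ioi t ∩ Set.Ioc 0 r = Set.Ioc t r := by
        ext x
        simp only [Set.mem_inter_iff, Set.mem_Ioi, Set.mem_Ioc]
        constructor
        · rintro ⟨h1, _, h3⟩; exact ⟨h1, h3⟩
        · rintro ⟨h1, h2⟩; exact ⟨h1, lt_trans ht.1 h1, h2⟩
      rw [hset]
    have hmeas : AEMeasurable (Function.uncurry fun t s => if t < s then g s else 0)
        ((h.measure.restrict (Set.Ioc (0 : ℝ) r)).prod
          (volume.restrict (Set.Ioc (0 : ℝ) r))) := by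
      apply Measurable.aemeasurable
      have : (Function.uncurry fun t s : ℝ => if t < s then g s else 0)
          = fun p : ℝ × ℝ => if p.1 < p.2 then g p.2 else 0 := rfl
      rw [this]
      exact Measurable.ite (measurableSet_lt measurable_fst measurable_snd)
        (hgm.comp measurable_snd) measurable_const
    have step2 := lintegral_lintegral_swap hmeas
    have hll : ∀ᵐ s : ℝ, Function.leftLim (h : ℝ → ℝ) s = h s := by
      have hc := h.countable_leftLim_ne
      rw [ae_iff]
      exact measure_mono_null (fun x hx => hx) (Set.Countable.measure_zero hc _)
    have step3 : ∫⁻ s in Set.Ioc (0 : ℝ) r,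
          (∫⁻ t in Set.Ioc (0 : ℝ) r, (if t < s then g s else 0) ∂h.measure)
        = ∫⁻ s in Set.Ioc (0 : ℝ) r, ENNReal.ofReal (C / s ^ (d - 1) * h s) := by
      apply setLIntegral_congr_fun_ae measurableSet_Ioc
      filter_upwards [hll] with s hs hsmem
      have hite : (fun t : ℝ => if t < s then g s else 0)
          = (Set.Iio s).indicator (fun _ => g s) := by
        funext t; simp [Set.indicator_apply]
      rw [hite, lintegral_indicator measurableSet_Iio,
        Measure.restrict_restrict measurableSet_Iio]
      have hset : Set.Iio s ∩ Set.Ioc 0 r = Set.Ioo 0 s := by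
        ext x
        simp only [Set.mem_inter_iff, Set.mem_Iio, Set.mem_Ioo, Set.mem_Ioc]
        constructor
        · rintro ⟨h1, h2, _⟩; exact ⟨h2, h1⟩
        · rintro ⟨h1, h2⟩; exact ⟨h2, h1, le_trans h2.le hsmem.2⟩
      rw [hset, setLIntegral_const, StieltjesFunction.measure_Ioo, h0, hs, sub_zero,
        hgdef, ← ENNReal.ofReal_mul (div_nonneg hCpos.le (pow_nonneg hsmem.1.le _))]
    rw [step1, step2, step3]
  rw [rhs_eq, key]
  exact lhs_eq
end

section
/- Let d ≥ 2 and μ a Borel measure on B̄(0, r) ⊂ ℝ^d. If there exist r₀ > 0 and R > r with sup_{y ∈ B̄(0, R)} N_y^μ(r₀) < ∞, then the Riesz potential pt_μ(y) = ∫ k_{d-2}(|x − y|) dμ(x) is bounded below on all of ℝ^d. -/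
open MeasureTheory Set Filter Metric ENNReal

/-- `d`-dimensional Euclidean space. -/
abbrev Eucl (d : ℕ) := EuclideanSpace ℝ (Fin d)

/-- Integrated radial counting function
`N_y^μ(t) := max{1, d-2} · ∫₀^t μ(B̄(y, s))/s^(d-1) ds` (valued in `ℝ≥0∞`). -/
noncomputable def Nmu (d : ℕ) (μ : Measure (Eucl d)) (y : Eucl d) (t : ℝ) : ℝ≥0∞ :=
  (max 1 (d - 2) : ℕ) *
    ∫⁻ s in Set.Ioc (0 : ℝ) t, μ (Metric.closedBall y s) / ENNReal.ofReal (s ^ (d - 1))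

/-- Potential of a measure: `pt_μ(y) := ∫ k_{d-2}(|x − y|) dμ(x)`. -/
noncomputable def ptMu (d : ℕ) (μ : Measure (Eucl d)) (y : Eucl d) : ℝ :=
  ∫ x, kk d ‖x - y‖ ∂μ

lemma kk_zero (d : ℕ) (hd : 2 ≤ d) : kk d 0 = 0 := by
  unfold kk
  split
  · exact Real.log_zero
  · next h => rw [zero_pow (by omega), _root_.div_zero]

lemma kk_nonpos (d : ℕ) {t : ℝ} (ht : 0 ≤ t) (ht1 : t ≤ 1) : kk d t ≤ 0 := by
  unfold kk
  split
  · exact Real.log_nonpos ht ht1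
  · rw [neg_div]
    simp only [neg_nonpos]
    positivity

lemma kk_mono_s12 (d : ℕ) {a b : ℝ} (ha : 0 < a) (hab : a ≤ b) : kk d a ≤ kk d b := by
  unfold kk
  split
  · exact Real.log_le_log ha hab
  · rw [neg_div, neg_div, neg_le_neg_iff]
    apply one_div_le_one_div_of_le (by positivity)
    exact pow_le_pow_left₀ ha.le hab _

-- FTC lemma

lemma kk_ftc (d : ℕ) (hd : 2 ≤ d) {t t₀ : ℝ} (ht : 0 < t) (htt : t ≤ t₀) :
    ((max 1 (d - 2) : ℕ) : ℝ) * ∫ s in t..t₀, (s ^ (d - 1))⁻¹ = kk d t₀ - kk d t := by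
  have ht₀ : 0 < t₀ := lt_of_lt_of_le ht htt
  have hz : (0:ℝ) ∉ Set.uIcc t t₀ := by
    rw [Set.uIcc_of_le htt]; intro h; exact absurd h.1 (not_le.mpr ht)
  rcases eq_or_lt_of_le hd with h2 | h3
  · -- d = 2
    have hd2 : d = 2 := h2.symm
    subst hd2
    simp only [kk, if_pos rfl]
    norm_num
    rw [intervalIntegral.integral_congr (g := fun s : ℝ => s⁻¹) (by intro s _; simp),
      integral_inv_of_pos ht ht₀, Real.log_div ht₀.ne' ht.ne']
  · -- d ≥ 3
    have hne : d ≠ 2 := by omega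
    have hmax : max 1 (d - 2) = d - 2 := by omega
    have hst : ∀ s : ℝ, (s ^ (d - 1))⁻¹ = s ^ (-(d - 1 : ℕ) : ℤ) := by
      intro s; rw [zpow_neg, zpow_natCast]
    rw [intervalIntegral.integral_congr (g := fun s : ℝ => s ^ (-(d - 1 : ℕ) : ℤ))
      (by intro s _; exact hst s)]
    rw [integral_zpow (Or.inr ⟨by omega, hz⟩)]
    simp only [kk, if_neg hne, hmax]
    have he : (-(d - 1 : ℕ) : ℤ) + 1 = -(d - 2 : ℕ) := by omega
    rw [he]
    rw [zpow_neg, zpow_neg, zpow_natCast, zpow_natCast]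
    have h1 : (t₀:ℝ) ^ (d-2) ≠ 0 := by positivity
    have h2 : (t:ℝ) ^ (d-2) ≠ 0 := by positivity
    have h3 : ((-(d - 1 : ℕ) : ℤ) : ℝ) + 1 = -((d - 2 : ℕ) : ℝ) := by push_cast [Nat.cast_sub (by omega : 1 ≤ d), Nat.cast_sub (by omega : 2 ≤ d)]; ring
    rw [h3]
    have h4 : ((d - 2 : ℕ) : ℝ) ≠ 0 := by
      simp only [ne_eq, Nat.cast_eq_zero]; omega
    have key : ∀ a X Y : ℝ, a ≠ 0 → a * ((X - Y) / (-a)) = Y - X := by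
      intros a X Y ha
      rw [div_neg, mul_neg, mul_div_cancel₀ _ ha]; ring
    rw [key _ _ _ h4]
    rw [neg_div, neg_div, one_div, one_div]
    ring

lemma pointA (d : ℕ) (hd : 2 ≤ d) {t t₀ : ℝ} (ht : 0 ≤ t) (htt : t ≤ t₀) (ht₀ : 0 < t₀)
    (ht₀1 : t₀ ≤ 1) :
    ENNReal.ofReal (-kk d t) ≤ ((max 1 (d - 2) : ℕ) : ℝ≥0∞) *
      (∫⁻ s in Set.Ioc (0:ℝ) t₀, (Set.Ici t).indicator
        (fun s => (ENNReal.ofReal (s ^ (d - 1)))⁻¹) s) + ENNReal.ofReal (-kk d t₀) := by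
  rcases eq_or_lt_of_le ht with h0 | h0
  · rw [← h0, kk_zero d hd, neg_zero, ENNReal.ofReal_zero]
    exact zero_le
  · -- t > 0
    have hI : (0:ℝ) ≤ ∫ s in t..t₀, (s ^ (d - 1))⁻¹ :=
      intervalIntegral.integral_nonneg htt (fun s hs => inv_nonneg.mpr (pow_nonneg (le_trans h0.le hs.1) _))
    have heq : -kk d t = ((max 1 (d - 2) : ℕ) : ℝ) * (∫ s in t..t₀, (s ^ (d - 1))⁻¹)
        + (-kk d t₀) := by
      have := kk_ftc d hd h0 htt; linarith
    rw [heq, ENNReal.ofReal_add (by positivity) (by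
      simp only [neg_nonneg]; exact kk_nonpos d (le_of_lt (lt_of_lt_of_le h0 htt)) ht₀1)]
    gcongr
    rw [ENNReal.ofReal_mul (by positivity), ENNReal.ofReal_natCast]
    gcongr
    -- ofReal (∫ s in t..t₀, (s^(d-1))⁻¹) ≤ ∫⁻ s in Ioc 0 t₀, indicator ...
    have hint : IntegrableOn (fun s : ℝ => (s ^ (d - 1))⁻¹) (Set.Ioc t t₀) := by
      apply (ContinuousOn.integrableOn_Icc ?_).mono_set Set.Ioc_subset_Icc_self
      intro s hs
      exact ((continuousAt_id.pow _).inv₀ ((pow_pos (lt_of_lt_of_le h0 hs.1) _).ne')).continuousWithinAt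
    rw [intervalIntegral.integral_of_le htt,
      MeasureTheory.ofReal_integral_eq_lintegral_ofReal hint
        ((ae_restrict_iff' measurableSet_Ioc).2 (Filter.Eventually.of_forall fun s hs => inv_nonneg.mpr (pow_nonneg (le_trans h0.le hs.1.le) _)))]
    calc ∫⁻ s in Set.Ioc t t₀, ENNReal.ofReal ((s ^ (d - 1))⁻¹)
        = ∫⁻ s in Set.Ioc t t₀, (ENNReal.ofReal (s ^ (d - 1)))⁻¹ := by
          apply setLIntegral_congr_fun measurableSet_Ioc
          exact fun s hs =>
            ENNReal.ofReal_inv_of_pos (pow_pos (lt_trans h0 hs.1) _)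
      _ ≤ ∫⁻ s in Set.Ici t ∩ Set.Ioc (0:ℝ) t₀, (ENNReal.ofReal (s ^ (d - 1)))⁻¹ := by
          apply lintegral_mono_set
          intro s hs
          exact ⟨le_of_lt hs.1, lt_trans h0 hs.1, hs.2⟩
      _ = ∫⁻ s in Set.Ioc (0:ℝ) t₀, (Set.Ici t).indicator
            (fun s => (ENNReal.ofReal (s ^ (d - 1)))⁻¹) s := by
          rw [lintegral_indicator measurableSet_Ici, Measure.restrict_restrict measurableSet_Ici]

lemma nearBound (d : ℕ) (hd : 2 ≤ d) (μ : Measure (Eucl d)) (y : Eucl d) {t₀ : ℝ}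
    (ht₀ : 0 < t₀) (ht₀1 : t₀ ≤ 1) (hfin : μ (Metric.closedBall y (t₀/2)) < ⊤) :
    ∫⁻ x in Metric.closedBall y (t₀/2), ENNReal.ofReal (-kk d ‖x - y‖) ∂μ ≤
      Nmu d μ y t₀ + ENNReal.ofReal (-kk d t₀) * μ (Metric.closedBall y (t₀/2)) := by
  set near := Metric.closedBall y (t₀/2) with hnear
  set g : ℝ → ℝ≥0∞ := fun s => (ENNReal.ofReal (s ^ (d - 1)))⁻¹ with hg
  set D : ℝ≥0∞ := ((max 1 (d - 2) : ℕ) : ℝ≥0∞) with hD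
  set F : Eucl d → ℝ → ℝ≥0∞ := fun x s => (Set.Ici ‖x - y‖).indicator g s with hF
  haveI : IsFiniteMeasure (μ.restrict near) :=
    ⟨by rwa [Measure.restrict_apply_univ]⟩
  have step1 : ∫⁻ x in near, ENNReal.ofReal (-kk d ‖x - y‖) ∂μ ≤
      ∫⁻ x in near, (D * ∫⁻ s in Set.Ioc (0:ℝ) t₀, F x s) + ENNReal.ofReal (-kk d t₀) ∂μ := by
    apply lintegral_mono_ae
    rw [ae_restrict_iff' measurableSet_closedBall]
    apply Filter.Eventually.of_forall
    intro x hx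
    have hx' : ‖x - y‖ ≤ t₀ := by
      rw [← dist_eq_norm] at *
      exact le_trans (Metric.mem_closedBall.mp hx) (by linarith)
    exact pointA d hd (norm_nonneg _) hx' ht₀ ht₀1
  have step2 : ∫⁻ x in near, (D * ∫⁻ s in Set.Ioc (0:ℝ) t₀, F x s) + ENNReal.ofReal (-kk d t₀) ∂μ
      = D * (∫⁻ x in near, ∫⁻ s in Set.Ioc (0:ℝ) t₀, F x s ∂(volume) ∂μ)
        + ENNReal.ofReal (-kk d t₀) * μ near := by
    rw [lintegral_add_right _ measurable_const, setLIntegral_const,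
      lintegral_const_mul' _ _ (by rw [hD]; exact ENNReal.natCast_ne_top _)]
  have hmeasF : AEMeasurable (Function.uncurry F)
      ((μ.restrict near).prod (volume.restrict (Set.Ioc (0:ℝ) t₀))) := by
    apply Measurable.aemeasurable
    have hset : MeasurableSet {p : Eucl d × ℝ | ‖p.1 - y‖ ≤ p.2} := by
      apply measurableSet_le
      · exact (continuous_fst.sub continuous_const).norm.measurable
      · exact measurable_snd
    have : Function.uncurry F = fun p : Eucl d × ℝ =>
        {p : Eucl d × ℝ | ‖p.1 - y‖ ≤ p.2}.indicator (fun p => g p.2) p := by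
      ext p
      simp only [Function.uncurry, hF, Set.indicator_apply, Set.mem_Ici, Set.mem_setOf_eq]
    rw [this]
    apply Measurable.indicator _ hset
    exact ((measurable_snd.pow_const _).ennreal_ofReal).inv
  have step3 : ∫⁻ x in near, ∫⁻ s in Set.Ioc (0:ℝ) t₀, F x s ∂(volume) ∂μ
      = ∫⁻ s in Set.Ioc (0:ℝ) t₀, ∫⁻ x in near, F x s ∂μ ∂(volume) :=
    lintegral_lintegral_swap hmeasF
  have step4 : ∀ s : ℝ, ∫⁻ x in near, F x s ∂μ ≤ μ (Metric.closedBall y s) / ENNReal.ofReal (s ^ (d-1)) := by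
    intro s
    have : ∀ x, F x s = (Metric.closedBall y s).indicator (fun _ => g s) x := by
      intro x
      simp only [hF, Set.indicator_apply, Set.mem_Ici, Metric.mem_closedBall, dist_eq_norm]
      by_cases hxs : ‖x - y‖ ≤ s
      · rw [if_pos hxs, Set.indicator_of_mem (by simpa [Metric.mem_closedBall, dist_eq_norm])]
      · rw [if_neg hxs, Set.indicator_of_notMem (by simpa [Metric.mem_closedBall, dist_eq_norm] using hxs)]
    simp only [this]
    rw [lintegral_indicator measurableSet_closedBall, setLIntegral_const,
      Measure.restrict_apply measurableSet_closedBall, ENNReal.div_eq_inv_mul]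
    exact mul_le_mul_right (measure_mono Set.inter_subset_left) _
  calc ∫⁻ x in near, ENNReal.ofReal (-kk d ‖x - y‖) ∂μ
      ≤ D * (∫⁻ x in near, ∫⁻ s in Set.Ioc (0:ℝ) t₀, F x s ∂(volume) ∂μ)
        + ENNReal.ofReal (-kk d t₀) * μ near := by rw [← step2]; exact step1
    _ ≤ D * (∫⁻ s in Set.Ioc (0:ℝ) t₀, μ (Metric.closedBall y s) / ENNReal.ofReal (s ^ (d-1)) ∂(volume))
        + ENNReal.ofReal (-kk d t₀) * μ near := by
        gcongr
        rw [step3]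
        exact lintegral_mono fun s => step4 s
    _ = Nmu d μ y t₀ + ENNReal.ofReal (-kk d t₀) * μ near := rfl

lemma ballFin (d : ℕ) (μ : Measure (Eucl d)) (y : Eucl d) {t₀ : ℝ} {C : ℝ≥0∞}
    (ht₀ : 0 < t₀) (hC : C < ⊤) (hN : Nmu d μ y t₀ ≤ C) :
    μ (Metric.closedBall y (t₀/2)) < ⊤ := by
  by_contra h
  have h : μ (Metric.closedBall y (t₀/2)) = ⊤ := by
    simpa [lt_top_iff_ne_top, not_not] using h
  have key : (∫⁻ s in Set.Ioc (0:ℝ) t₀,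
      μ (Metric.closedBall y s) / ENNReal.ofReal (s ^ (d - 1))) = ⊤ := by
    rw [eq_top_iff]
    calc (⊤ : ℝ≥0∞) = ∫⁻ s in Set.Ioc (t₀/2) t₀, ⊤ := by
          rw [setLIntegral_const, Real.volume_Ioc]
          rw [ENNReal.top_mul]
          simp only [ne_eq, ENNReal.ofReal_eq_zero, not_le]
          linarith
      _ ≤ ∫⁻ s in Set.Ioc (t₀/2) t₀,
            μ (Metric.closedBall y s) / ENNReal.ofReal (s ^ (d - 1)) := by
          apply setLIntegral_mono' measurableSet_Ioc
          intro s hs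
          have h1 : μ (Metric.closedBall y s) = ⊤ :=
            eq_top_iff.mpr (h ▸ measure_mono (Metric.closedBall_subset_closedBall hs.1.le))
          rw [h1, ENNReal.top_div_of_ne_top (by simp)]
      _ ≤ _ := lintegral_mono_set (Set.Ioc_subset_Ioc (by linarith) le_rfl)
  have : Nmu d μ y t₀ = ⊤ := by
    rw [Nmu, key, ENNReal.mul_top]
    simp only [ne_eq, Nat.cast_eq_zero]
    omega
  exact absurd (this ▸ hN) (by simpa using hC.ne)

lemma muFin (d : ℕ) (μ : Measure (Eucl d)) {r R t₀ : ℝ} {C : ℝ≥0∞}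
    (hr : 0 < r) (hrR : r < R) (ht₀ : 0 < t₀) (hC : C < ⊤)
    (hsupp : μ (Metric.closedBall (0 : Eucl d) r)ᶜ = 0)
    (hbound : ∀ y ∈ Metric.closedBall (0 : Eucl d) R, Nmu d μ y t₀ ≤ C) :
    μ Set.univ < ⊤ := by
  have hcomp : IsCompact (Metric.closedBall (0 : Eucl d) r) := isCompact_closedBall _ _
  have hcover : Metric.closedBall (0 : Eucl d) r ⊆
      ⋃ y : ↥(Metric.closedBall (0 : Eucl d) r), Metric.ball (y : Eucl d) (t₀/2) := by
    intro x hx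
    exact Set.mem_iUnion.mpr ⟨⟨x, hx⟩, Metric.mem_ball_self (by linarith)⟩
  obtain ⟨t, ht⟩ := hcomp.elim_finite_subcover _ (fun y => Metric.isOpen_ball) hcover
  have hball : μ (Metric.closedBall (0 : Eucl d) r) < ⊤ := by
    calc μ (Metric.closedBall (0 : Eucl d) r) ≤ ∑ i ∈ t, μ (Metric.ball (i : Eucl d) (t₀/2)) :=
          le_trans (measure_mono ht) (measure_biUnion_finset_le t _)
      _ < ⊤ := by
          apply ENNReal.sum_lt_top.mpr
          intro i _
          calc μ (Metric.ball (i : Eucl d) (t₀/2)) ≤ μ (Metric.closedBall (i : Eucl d) (t₀/2)) :=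
                measure_mono Metric.ball_subset_closedBall
            _ < ⊤ := ballFin d μ i ht₀ hC (hbound i
                (Metric.closedBall_subset_closedBall hrR.le i.2))
  calc μ Set.univ ≤ μ (Metric.closedBall (0 : Eucl d) r) + μ (Metric.closedBall (0 : Eucl d) r)ᶜ :=
        by rw [← Set.union_compl_self (Metric.closedBall (0 : Eucl d) r)]; exact measure_union_le _ _
    _ < ⊤ := by rw [hsupp, add_zero]; exact hball

theorem stmt12 (d : ℕ) (hd : 2 ≤ d) (r : ℝ) (hr : 0 < r) (μ : Measure (Eucl d))
    (hsupp : μ (Metric.closedBall (0 : Eucl d) r)ᶜ = 0)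
    (hsup : ∃ r₀ > (0 : ℝ), ∃ R > r, ∃ C : ℝ≥0∞, C < ⊤ ∧
      ∀ y ∈ Metric.closedBall (0 : Eucl d) R, Nmu d μ y r₀ ≤ C) :
    ∃ c : ℝ, ∀ y : Eucl d, c ≤ ptMu d μ y := by
  obtain ⟨r₀, hr₀, R, hR, C, hC, hbound₀⟩ := hsup
  set t₀ : ℝ := min r₀ (min 1 (R - r)) with ht₀def
  have ht₀ : 0 < t₀ := lt_min hr₀ (lt_min one_pos (by linarith))
  have ht₀1 : t₀ ≤ 1 := le_trans (min_le_right _ _) (min_le_left _ _)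
  have ht₀Rr : t₀ ≤ R - r := le_trans (min_le_right _ _) (min_le_right _ _)
  have hbound : ∀ y ∈ Metric.closedBall (0 : Eucl d) R, Nmu d μ y t₀ ≤ C := by
    intro y hy
    refine le_trans ?_ (hbound₀ y hy)
    exact mul_le_mul_right (lintegral_mono_set (Set.Ioc_subset_Ioc le_rfl (min_le_left _ _))) _
  have hμfin : μ Set.univ < ⊤ := muFin d μ hr hR ht₀ hC hsupp hbound
  haveI : IsFiniteMeasure μ := ⟨hμfin⟩
  set M : ℝ := (μ Set.univ).toReal with hM
  set K : ℝ := -kk d t₀ with hK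
  have hK0 : 0 ≤ K := by rw [hK, neg_nonneg]; exact kk_nonpos d ht₀.le ht₀1
  set b : ℝ := kk d (t₀/2) with hb
  have hb0 : b ≤ 0 := kk_nonpos d (by linarith) (by linarith)
  have hM0 : 0 ≤ M := ENNReal.toReal_nonneg
  refine ⟨b * M - (C.toReal + K * M), ?_⟩
  intro y
  have hCKM : 0 ≤ C.toReal + K * M := by positivity
  by_cases hint : Integrable (fun x => kk d ‖x - y‖) μ
  swap
  · rw [ptMu, integral_undef hint]
    nlinarith [mul_nonpos_of_nonpos_of_nonneg hb0 hM0]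
  -- integrable case
  set near := Metric.closedBall y (t₀/2) with hnear
  have hmnear : MeasurableSet near := measurableSet_closedBall
  have hsplit : ptMu d μ y = (∫ x in near, kk d ‖x - y‖ ∂μ) + ∫ x in nearᶜ, kk d ‖x - y‖ ∂μ :=
    (integral_add_compl hmnear hint).symm
  -- far bound
  have hfar : b * M ≤ ∫ x in nearᶜ, kk d ‖x - y‖ ∂μ := by
    have h1 : b * M ≤ b * (μ nearᶜ).toReal := by
      apply mul_le_mul_of_nonpos_left _ hb0
      exact ENNReal.toReal_mono hμfin.ne (measure_mono (Set.subset_univ _))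
    refine le_trans h1 ?_
    have h2 : ∫ x in nearᶜ, b ∂μ = (μ nearᶜ).toReal * b := by
      rw [setIntegral_const, smul_eq_mul]; rfl
    rw [mul_comm] at h2
    rw [← h2]
    apply setIntegral_mono_on ((integrableOn_const_iff (by simp)).mpr (Or.inr (measure_lt_top μ _)))
      hint.integrableOn hmnear.compl
    intro x hx
    have : t₀/2 ≤ ‖x - y‖ := by
      have := hx
      simp only [hnear, Set.mem_compl_iff, Metric.mem_closedBall, not_le, dist_eq_norm] at this
      linarith
    exact kk_mono_s12 d (by linarith) this
  -- near bound
  have hnearb : -(C.toReal + K * M) ≤ ∫ x in near, kk d ‖x - y‖ ∂μ := by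
    by_cases hyR : y ∈ Metric.closedBall (0 : Eucl d) R
    · have hfin : μ near < ⊤ := ballFin d μ y ht₀ hC (hbound y hyR)
      have hnn : ∀ x ∈ near, 0 ≤ -kk d ‖x - y‖ := by
        intro x hx
        rw [neg_nonneg]
        refine kk_nonpos d (norm_nonneg _) ?_
        have : dist x y ≤ t₀/2 := Metric.mem_closedBall.mp hx
        rw [dist_eq_norm] at this
        linarith
      have heq : ∫ x in near, (-kk d ‖x - y‖) ∂μ
          = (∫⁻ x in near, ENNReal.ofReal (-kk d ‖x - y‖) ∂μ).toReal := by
        apply integral_eq_lintegral_of_nonneg_ae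
        · exact (ae_restrict_iff' hmnear).2 (Filter.Eventually.of_forall hnn)
        · exact (hint.aestronglyMeasurable.restrict).neg
      have hle : (∫⁻ x in near, ENNReal.ofReal (-kk d ‖x - y‖) ∂μ).toReal
          ≤ C.toReal + K * M := by
        have h3 : (∫⁻ x in near, ENNReal.ofReal (-kk d ‖x - y‖) ∂μ)
            ≤ C + ENNReal.ofReal K * μ Set.univ := by
          refine le_trans (nearBound d hd μ y ht₀ ht₀1 hfin) ?_
          exact add_le_add (hbound y hyR)
            (mul_le_mul_right (measure_mono (Set.subset_univ _)) _)
        refine le_trans (ENNReal.toReal_mono ?_ h3) ?_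
        · exact (ENNReal.add_ne_top.mpr ⟨hC.ne, ENNReal.mul_ne_top ENNReal.ofReal_ne_top hμfin.ne⟩)
        · rw [ENNReal.toReal_add hC.ne (ENNReal.mul_ne_top ENNReal.ofReal_ne_top hμfin.ne),
            ENNReal.toReal_mul, ENNReal.toReal_ofReal hK0]
      have : ∫ x in near, kk d ‖x - y‖ ∂μ = -∫ x in near, (-kk d ‖x - y‖) ∂μ := by
        rw [integral_neg]; ring
      rw [this, heq]
      linarith [heq ▸ hle]
    · have hnull : μ near = 0 := by
        have hsub : near ⊆ (Metric.closedBall (0 : Eucl d) r)ᶜ := by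
          intro x hx
          simp only [Set.mem_compl_iff, Metric.mem_closedBall, not_le]
          have h1 : dist x y ≤ t₀/2 := Metric.mem_closedBall.mp hx
          have h2 : R < dist y 0 := by
            simpa [Metric.mem_closedBall, not_le] using hyR
          have h3 : dist y 0 ≤ dist y x + dist x 0 := dist_triangle _ _ _
          rw [dist_comm] at h1
          linarith
        exact measure_mono_null hsub hsupp
      have hz : μ.restrict near = 0 := Measure.restrict_eq_zero.mpr hnull
      rw [hz, integral_zero_measure]
      linarith
  rw [hsplit]
  linarith
end
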